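/- arXiv:1807.01240 — 3 statements merged into one kernel-verified Lean document; each statement's English description precedes it below -/
import Mathlib

section
/- For any two cache algorithms P and Q over a sufficiently large block set, and any trace t ∈ B^l, there exists a trace t' ∈ B^l with P(t') = Q(t') = Q(t). -/
structure CacheAlg (B : Type) where
  S : Type
  init : S
  n : ℕ
  tr : S → Fin n → S
  evict : S → B → S × Fin n

variable {B : Type} [DecidableEq B]

abbrev CacheAlg.Config (P : CacheAlg B) := P.S × (Fin P.n → Option B)

noncomputable def CacheAlg.upd (P : CacheAlg B) (g : P.Config) (b : B) : P.Config :=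
  if h : ∃ j, g.2 j = some b then (P.tr g.1 h.choose, g.2)
  else ((P.evict g.1 b).1, Function.update g.2 (P.evict g.1 b).2 (some b))

noncomputable def CacheAlg.updTrace (P : CacheAlg B) (g : P.Config) : List B → P.Config
  | [] => g
  | b :: t => P.updTrace (P.upd g b) t

noncomputable def CacheAlg.missesFrom (P : CacheAlg B) (g : P.Config) : List B → ℕ
  | [] => 0
  | b :: t => (if ∃ j, g.2 j = some b then 0 else 1) + P.missesFrom (P.upd g b) t

def CacheAlg.initConfig (P : CacheAlg B) : P.Config := (P.init, fun _ => none)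

/-- Number of misses of `P` on trace `t` from the empty initial configuration. -/
noncomputable def CacheAlg.misses (P : CacheAlg B) (t : List B) : ℕ := P.missesFrom P.initConfig t

/-- The leak ratio `r_{P,Q}(l)`: supremum over sets `T` of traces of length `l`
of `|P(T)| / |Q(T)|`. -/
noncomputable def leakRatio (P Q : CacheAlg B) (l : ℕ) : ℝ :=
  sSup {r : ℝ | ∃ T : Finset (List B), T.Nonempty ∧ (∀ t ∈ T, t.length = l) ∧
    r = ((T.image P.misses).card : ℝ) / ((T.image Q.misses).card : ℝ)}

/-- Lifting of a bijection on blocks to cache contents, mapping `⊥` to `⊥`. -/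
def renameContent (π : B ≃ B) {n : ℕ} (c : Fin n → Option B) : Fin n → Option B :=
  fun j => (c j).map π

/-- Lifting of a bijection on blocks to cache configurations. -/
def CacheAlg.renameConfig (P : CacheAlg B) (π : B ≃ B) (g : P.Config) : P.Config :=
  (g.1, renameContent π g.2)

/-- The eviction function is independent of the accessed block. -/
def CacheAlg.EvictBlockIndep (P : CacheAlg B) : Prop :=
  ∀ (s : P.S) (b b' : B), P.evict s b = P.evict s b'

/-- Congruence of pairs of cache configurations via a simultaneous renaming. -/
def CacheCongruent (P Q : CacheAlg B) (x y : P.Config × Q.Config) : Prop :=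
  ∃ π : B ≃ B, P.renameConfig π x.1 = y.1 ∧ Q.renameConfig π x.2 = y.2

section Aux
variable {B : Type} [DecidableEq B]

lemma upd_mem (P : CacheAlg B) (g : P.Config) (b : B) : ∃ j, (P.upd g b).2 j = some b := by
  unfold CacheAlg.upd
  split
  · next h => simpa using h
  · exact ⟨(P.evict g.1 b).2, by simp⟩

lemma upd_snd_of_hit (P : CacheAlg B) (g : P.Config) (b : B) (h : ∃ j, g.2 j = some b) :
    (P.upd g b).2 = g.2 := by
  unfold CacheAlg.upd
  rw [dif_pos h]

lemma missesFrom_replicate (P : CacheAlg B) (b : B) :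
    ∀ (m : ℕ) (g : P.Config), (∃ j, g.2 j = some b) →
      P.missesFrom g (List.replicate m b) = 0
  | 0, g, _ => rfl
  | m + 1, g, h => by
    rw [List.replicate_succ]
    show (if ∃ j, g.2 j = some b then 0 else 1) + P.missesFrom (P.upd g b) _ = 0
    rw [if_pos h, missesFrom_replicate P b m (P.upd g b) (by rw [upd_snd_of_hit P g b h]; exact h)]

lemma exists_fresh (P Q : CacheAlg B)
    (hB : (P.n + Q.n : Cardinal) < Cardinal.mk B) (gP : P.Config) (gQ : Q.Config) :
    ∃ b : B, (¬∃ j, gP.2 j = some b) ∧ (¬∃ j, gQ.2 j = some b) := by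
  by_contra hc
  push_neg at hc
  set S : Finset (Option B) := Finset.univ.image gP.2 ∪ Finset.univ.image gQ.2 with hS
  have hmem : ∀ b : B, some b ∈ S := by
    intro b
    by_cases h1 : ∃ j, gP.2 j = some b
    · obtain ⟨j, hj⟩ := h1
      exact Finset.mem_union_left _ (Finset.mem_image.2 ⟨j, Finset.mem_univ j, hj⟩)
    · obtain ⟨j, hj⟩ := hc b (by simpa [not_exists] using h1)
      exact Finset.mem_union_right _ (Finset.mem_image.2 ⟨j, Finset.mem_univ j, hj⟩)
  have hinj : Function.Injective (fun b : B => (⟨some b, hmem b⟩ : {o : Option B // o ∈ S})) := by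
    intro a b h
    have := congrArg Subtype.val h
    simpa using this
  have h1 : Cardinal.mk B ≤ Cardinal.mk {o : Option B // o ∈ S} :=
    Cardinal.mk_le_of_injective hinj
  have h2 : Cardinal.mk {o : Option B // o ∈ S} = (S.card : Cardinal) := by
    simp
  have h3 : S.card ≤ P.n + Q.n := by
    calc S.card ≤ (Finset.univ.image gP.2).card + (Finset.univ.image gQ.2).card :=
          Finset.card_union_le _ _
      _ ≤ P.n + Q.n := by
          have hp : (Finset.univ.image gP.2).card ≤ P.n := by
            simpa using Finset.card_image_le (f := gP.2) (s := Finset.univ)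
          have hq : (Finset.univ.image gQ.2).card ≤ Q.n := by
            simpa using Finset.card_image_le (f := gQ.2) (s := Finset.univ)
          omega
  have : Cardinal.mk B ≤ (P.n + Q.n : Cardinal) := by
    rw [h2] at h1
    refine h1.trans ?_
    exact_mod_cast Nat.cast_le.2 h3
  exact absurd hB (not_lt.2 this)

lemma build (P Q : CacheAlg B) (hB : (P.n + Q.n : Cardinal) < Cardinal.mk B) :
    ∀ (k m : ℕ) (gP : P.Config) (gQ : Q.Config), (k = 0 → m = 0) →
      ∃ t' : List B, t'.length = k + m ∧
        P.missesFrom gP t' = k ∧ Q.missesFrom gQ t' = k := by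
  intro k
  induction k with
  | zero =>
    intro m gP gQ h
    exact ⟨[], by simp [h rfl], rfl, rfl⟩
  | succ k ih =>
    intro m gP gQ _
    obtain ⟨b, hbP, hbQ⟩ := exists_fresh P Q hB gP gQ
    cases k with
    | zero =>
      refine ⟨b :: List.replicate m b, by simp; omega, ?_, ?_⟩
      · show (if ∃ j, gP.2 j = some b then 0 else 1) + P.missesFrom (P.upd gP b) _ = 1
        rw [if_neg hbP, missesFrom_replicate P b m _ (upd_mem P gP b)]
      · show (if ∃ j, gQ.2 j = some b then 0 else 1) + Q.missesFrom (Q.upd gQ b) _ = 1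
        rw [if_neg hbQ, missesFrom_replicate Q b m _ (upd_mem Q gQ b)]
    | succ k' =>
      obtain ⟨t', hl, hP, hQ⟩ := ih m (P.upd gP b) (Q.upd gQ b) (by omega)
      refine ⟨b :: t', by simp [hl]; omega, ?_, ?_⟩
      · show (if ∃ j, gP.2 j = some b then 0 else 1) + P.missesFrom (P.upd gP b) t' = _
        rw [if_neg hbP, hP]; omega
      · show (if ∃ j, gQ.2 j = some b then 0 else 1) + Q.missesFrom (Q.upd gQ b) t' = _
        rw [if_neg hbQ, hQ]; omega

lemma missesFrom_le (P : CacheAlg B) : ∀ (t : List B) (g : P.Config),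
    P.missesFrom g t ≤ t.length
  | [], _ => le_refl _
  | b :: t, g => by
    show (if ∃ j, g.2 j = some b then 0 else 1) + P.missesFrom (P.upd g b) t ≤ t.length + 1
    have := missesFrom_le P t (P.upd g b)
    split <;> omega

lemma one_le_misses (Q : CacheAlg B) (b : B) (t : List B) : 1 ≤ Q.misses (b :: t) := by
  show 1 ≤ (if ∃ j, (Q.initConfig).2 j = some b then 0 else 1) + _
  rw [if_neg (by simp [CacheAlg.initConfig])]
  omega

end Aux

theorem exists_trace_matching_misses (P Q : CacheAlg B)
    (hB : (P.n + Q.n : Cardinal) < Cardinal.mk B) (t : List B) :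
    ∃ t' : List B, t'.length = t.length ∧
      P.misses t' = Q.misses t ∧ Q.misses t' = Q.misses t := by
  have hk : Q.misses t ≤ t.length := missesFrom_le Q t Q.initConfig
  have hzero : Q.misses t = 0 → t.length = 0 := by
    intro h0
    cases t with
    | nil => rfl
    | cons b s => exact absurd h0 (by have := one_le_misses Q b s; omega)
  obtain ⟨t', hl, hP, hQ⟩ := build P Q hB (Q.misses t) (t.length - Q.misses t)
    P.initConfig Q.initConfig (by intro h; have := hzero h; omega)
  exact ⟨t', by omega, hP, hQ⟩
end

section
/- Under the same renaming setup: for every configuration (s,c), every trace t, and every bijection π on blocks, the number of misses is invariant under renaming: P((s,c), t) = P(π*(s,c), π*(t)). -/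
variable {B : Type} [DecidableEq B]

set_option linter.unusedSectionVars false

lemma hit_iff (π : B ≃ B) {n : ℕ} (c : Fin n → Option B) (b : B) (j : Fin n) :
    renameContent π c j = some (π b) ↔ c j = some b := by
  simp [renameContent, Option.map_eq_some_iff]

lemma hit_pred_eq (π : B ≃ B) {n : ℕ} (c : Fin n → Option B) (b : B) :
    (fun j => c j = some b) = (fun j => renameContent π c j = some (π b)) :=
  funext fun j => propext (hit_iff π c b j).symm

lemma hit_ex_eq (π : B ≃ B) {n : ℕ} (c : Fin n → Option B) (b : B) :
    (∃ j, c j = some b) = (∃ j, renameContent π c j = some (π b)) := by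
  rw [show (fun j => c j = some b) = (fun j => renameContent π c j = some (π b)) from
    hit_pred_eq π c b]

lemma choose_eq {α : Type*} {p q : α → Prop} (h : p = q) (hp : ∃ x, p x) (hq : ∃ x, q x) :
    hp.choose = hq.choose := by subst h; rfl

lemma upd_rename (P : CacheAlg B) (hEvict : P.EvictBlockIndep) (π : B ≃ B)
    (g : P.Config) (b : B) :
    P.renameConfig π (P.upd g b) = P.upd (P.renameConfig π g) (π b) := by
  have hp : (∃ j, g.2 j = some b) = (∃ j, (P.renameConfig π g).2 j = some (π b)) :=
    hit_ex_eq π g.2 b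
  unfold CacheAlg.upd
  by_cases h : ∃ j, g.2 j = some b
  · have h' : ∃ j, (P.renameConfig π g).2 j = some (π b) := hp ▸ h
    rw [dif_pos h, dif_pos h']
    have hc : h.choose = h'.choose := by
      have hpred : (fun j => g.2 j = some b)
          = (fun j => (P.renameConfig π g).2 j = some (π b)) := hit_pred_eq π g.2 b
      exact choose_eq hpred h h'
    simp [CacheAlg.renameConfig, hc]
  · have h' : ¬ ∃ j, (P.renameConfig π g).2 j = some (π b) := hp ▸ h
    rw [dif_neg h, dif_neg h']
    have he : P.evict g.1 b = P.evict g.1 (π b) := hEvict _ _ _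
    simp only [CacheAlg.renameConfig, ← he]
    refine Prod.ext rfl ?_
    funext j
    by_cases hj : j = (P.evict g.1 b).2 <;> simp [renameContent, Function.update, hj]

theorem misses_rename_invariant (P : CacheAlg B) (hEvict : P.EvictBlockIndep)
    (π : B ≃ B) (g : P.Config) (t : List B) :
    P.missesFrom g t = P.missesFrom (P.renameConfig π g) (t.map π) := by
  induction t generalizing g with
  | nil => rfl
  | cons b t ih =>
    simp only [List.map_cons, CacheAlg.missesFrom]
    rw [← upd_rename P hEvict π g b, ← ih (P.upd g b)]
    congr 1
    by_cases h : ∃ j, g.2 j = some b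
    · obtain ⟨j, hj⟩ := h
      rw [if_pos ⟨j, hj⟩, if_pos ⟨j, (hit_iff π g.2 b j).mpr hj⟩]
    · rw [if_neg h, if_neg (fun ⟨j, hj⟩ => h ⟨j, (hit_iff π g.2 b j).mp hj⟩)]
end

section
/- Let P be a cache algorithm with block-independent eviction and let π be a bijection on blocks such that configurations satisfy u_{m+1} = π*(u_m) for a sequence of configurations u_m, and traces ω_{m+1} = π*(ω_m). If P(u_0, ω_0) = a, then P(u_m, ω_m) = a for all m ∈ ℕ, and hence P on the pumped trace τ_m = ω_0 ∘ ω_1 ∘ … ∘ ω_{m−1} starting from u_0 produces exactly m·a misses. -/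
variable {B : Type} [DecidableEq B]

/-- The pumped trace `τ_m = ω_0 ∘ ω_1 ∘ … ∘ ω_{m−1}`. -/
def pumped (ω : ℕ → List B) : ℕ → List B
  | 0 => []
  | m + 1 => pumped ω m ++ ω m


lemma rename_hit_iff (P : CacheAlg B) (π : B ≃ B) (g : P.Config) (b : B) :
    ∀ j, ((P.renameConfig π g).2 j = some (π b)) ↔ (g.2 j = some b) := by
  intro j
  simp only [CacheAlg.renameConfig, renameContent]
  cases g.2 j with
  | none => simp
  | some x => simp [Option.map_some]

lemma rename_upd (P : CacheAlg B) (hEvict : P.EvictBlockIndep) (π : B ≃ B)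
    (g : P.Config) (b : B) :
    P.upd (P.renameConfig π g) (π b) = P.renameConfig π (P.upd g b) := by
  have hpq : (fun j => (P.renameConfig π g).2 j = some (π b)) = (fun j => g.2 j = some b) := by
    funext j; exact propext (rename_hit_iff P π g b j)
  unfold CacheAlg.upd
  by_cases h : ∃ j, g.2 j = some b
  · have h' : ∃ j, (P.renameConfig π g).2 j = some (π b) := by rw [hpq]; exact h
    rw [dif_pos h', dif_pos h]
    have key : ∀ (p q : Fin P.n → Prop) (hp : ∃ j, p j) (hq : ∃ j, q j),
        p = q → hp.choose = hq.choose := by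
      rintro p q hp hq rfl; rfl
    have hch := key _ _ h' h hpq
    rw [hch]; simp [CacheAlg.renameConfig]
  · have h' : ¬ ∃ j, (P.renameConfig π g).2 j = some (π b) := by rw [hpq]; exact h
    rw [dif_neg h', dif_neg h]
    have he : P.evict (P.renameConfig π g).1 (π b) = P.evict g.1 b := by
      simp [CacheAlg.renameConfig, hEvict g.1 (π b) b]
    rw [he]
    simp only [CacheAlg.renameConfig, renameContent]
    refine Prod.ext rfl ?_
    funext j
    by_cases hj : j = (P.evict g.1 b).2
    · subst hj; simp [renameContent]
    · simp [renameContent, Function.update_of_ne hj]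

lemma rename_missesFrom (P : CacheAlg B) (hEvict : P.EvictBlockIndep) (π : B ≃ B) :
    ∀ (t : List B) (g : P.Config),
      P.missesFrom (P.renameConfig π g) (t.map π) = P.missesFrom g t := by
  intro t
  induction t with
  | nil => intro g; rfl
  | cons b t ih =>
    intro g
    simp only [List.map_cons, CacheAlg.missesFrom]
    have hiff : (∃ j, (P.renameConfig π g).2 j = some (π b)) ↔ (∃ j, g.2 j = some b) :=
      exists_congr (rename_hit_iff P π g b)
    rw [rename_upd P hEvict, ih]
    congr 1
    simp [hiff]

lemma updTrace_append (P : CacheAlg B) :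
    ∀ (t t' : List B) (g : P.Config),
      P.updTrace g (t ++ t') = P.updTrace (P.updTrace g t) t' := by
  intro t
  induction t with
  | nil => intros; rfl
  | cons b t ih =>
    intro t' g
    simp only [List.cons_append, CacheAlg.updTrace]
    exact ih t' (P.upd g b)

lemma missesFrom_append (P : CacheAlg B) :
    ∀ (t t' : List B) (g : P.Config),
      P.missesFrom g (t ++ t') = P.missesFrom g t + P.missesFrom (P.updTrace g t) t' := by
  intro t
  induction t with
  | nil => intros; simp [CacheAlg.missesFrom, CacheAlg.updTrace]
  | cons b t ih =>
    intro t' g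
    simp only [List.cons_append, CacheAlg.missesFrom, CacheAlg.updTrace]
    rw [ih]
    ring


theorem pumping_misses (P : CacheAlg B) (hEvict : P.EvictBlockIndep)
    (π : B ≃ B) (u : ℕ → P.Config) (ω : ℕ → List B) (a : ℕ)
    (hω : ∀ m, ω (m + 1) = (ω m).map π)
    (hu : ∀ m, u (m + 1) = P.renameConfig π (u m))
    (hupd : ∀ m, u (m + 1) = P.updTrace (u m) (ω m))
    (ha : P.missesFrom (u 0) (ω 0) = a) :
    (∀ m, P.missesFrom (u m) (ω m) = a) ∧
    (∀ m, P.missesFrom (u 0) (pumped ω m) = m * a) := by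
  have h1 : ∀ m, P.missesFrom (u m) (ω m) = a := by
    intro m
    induction m with
    | zero => exact ha
    | succ k ihk =>
      rw [hu k, hω k, rename_missesFrom P hEvict]
      exact ihk
  refine ⟨h1, ?_⟩
  have hcfg : ∀ m, P.updTrace (u 0) (pumped ω m) = u m := by
    intro m
    induction m with
    | zero => rfl
    | succ k ihk =>
      rw [pumped, updTrace_append, ihk, ← hupd k]
  intro m
  induction m with
  | zero => simp [pumped, CacheAlg.missesFrom]
  | succ k ihk =>
    rw [pumped, missesFrom_append, ihk, hcfg k, h1 k]
    ring
end
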